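/- Let G be a claw-free graph and let T be a spanning tree of G rooted at a vertex r with the DFS property, i.e., for every edge (u,v) of G, one of u and v is an ancestor of the other in T (with respect to the root r). Then every vertex of T has at most two children in T; that is, T is a binary tree. -/
import Mathlib


/-- A graph is claw-free if it has no induced `K_{1,3}`: among any three distinct neighbors
of a vertex, some two are adjacent. -/
def ClawFree {V : Type*} (G : SimpleGraph V) : Prop :=
  ∀ v a b c : V, G.Adj v a → G.Adj v b → G.Adj v c → a ≠ b → a ≠ c → b ≠ c →
    G.Adj a b ∨ G.Adj a c ∨ G.Adj b c

/-- In a tree `T` rooted at `r`, vertex `u` is an ancestor of `v` if `u` lies on every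
path in `T` from `r` to `v` (in a tree there is a unique such path). -/
def IsAncestor {V : Type*} (T : SimpleGraph V) (r u v : V) : Prop :=
  ∀ p : T.Path r v, u ∈ p.val.support

/-- If `G` is claw-free and `T` is a spanning tree of `G` rooted at `r` with the DFS
property (for every edge of `G`, one endpoint is an ancestor of the other), then every
vertex has at most two children in `T`. -/
theorem clawfree_dfs_tree_binary
    {V : Type*} [Fintype V] (G : SimpleGraph V) (hcf : ClawFree G)
    (T : SimpleGraph V) (hle : T ≤ G) (htree : T.IsTree) (r : V)
    (hdfs : ∀ u v : V, G.Adj u v → IsAncestor T r u v ∨ IsAncestor T r v u) :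
    ∀ v : V, {c : V | T.Adj v c ∧ IsAncestor T r v c}.ncard ≤ 2 := by
  classical
  intro v
  -- key lemma: in a path p : x ⟶ y, if z ∈ support and z ≠ y then y ∉ support (takeUntil z)
  have key : ∀ (x y z : V) (p : T.Walk x y), p.IsPath → ∀ (hz : z ∈ p.support),
      z ≠ y → y ∉ (p.takeUntil z hz).support := by
    intro x y z p hp hz hne hy
    have hspec := p.take_spec hz
    have hnodup : p.support.Nodup := hp.support_nodup
    rw [← hspec, SimpleGraph.Walk.support_append] at hnodup
    have hdisj := List.disjoint_of_nodup_append hnodup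
    have hyend : y ∈ (p.dropUntil z hz).support := SimpleGraph.Walk.end_mem_support _
    have hytail : y ∈ (p.dropUntil z hz).support.tail := by
      rw [SimpleGraph.Walk.support_eq_cons (p.dropUntil z hz), List.mem_cons] at hyend
      rcases hyend with h | h
      · exact absurd h.symm hne
      · exact h
    exact hdisj hy hytail
  -- if a, b are distinct children of v then a is not an ancestor of b
  have hanti : ∀ a b : V, T.Adj v a → IsAncestor T r v a → T.Adj v b → IsAncestor T r v b →
      a ≠ b → ¬ IsAncestor T r a b := by
    intro a b hva hvanc hvb hvbanc hab hanc
    obtain ⟨w⟩ := htree.isConnected.preconnected r v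
    set p := w.toPath.val with hpdef
    have hp : p.IsPath := w.toPath.prop
    -- b is not on the path from r to v
    have hbnp : b ∉ p.support := by
      intro hbp
      have hpath : (p.takeUntil b hbp).IsPath := hp.takeUntil hbp
      have hv : v ∈ (p.takeUntil b hbp).support :=
        hvbanc ⟨p.takeUntil b hbp, hpath⟩
      exact key r v b p hp hbp hvb.ne' hv
    -- extend p with the edge v-b to a path from r to b
    have hq : (SimpleGraph.Walk.cons hvb.symm p.reverse).IsPath := by
      rw [SimpleGraph.Walk.cons_isPath_iff]
      refine ⟨hp.reverse, ?_⟩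
      simpa using hbnp
    have hq' : (SimpleGraph.Walk.cons hvb.symm p.reverse).reverse.IsPath := hq.reverse
    have haq : a ∈ (SimpleGraph.Walk.cons hvb.symm p.reverse).reverse.support :=
      hanc ⟨_, hq'⟩
    have hap : a ∈ p.support := by
      simp only [SimpleGraph.Walk.support_reverse, SimpleGraph.Walk.support_cons,
        List.mem_reverse, List.mem_cons] at haq
      rcases haq with h | h
      · exact absurd h hab
      · simpa using h
    -- but then v must lie on the r..a prefix of p, contradicting that v is the end of p
    have hpath : (p.takeUntil a hap).IsPath := hp.takeUntil hap
    have hv : v ∈ (p.takeUntil a hap).support := hvanc ⟨p.takeUntil a hap, hpath⟩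
    exact key r v a p hp hap hva.ne' hv
  by_contra hlt
  rw [not_le] at hlt
  obtain ⟨a, ha, b, hb, c, hc, hab, hac, hbc⟩ :=
    (Set.two_lt_ncard (Set.toFinite _)).mp hlt
  obtain ⟨hva, hvaanc⟩ := ha
  obtain ⟨hvb, hvbanc⟩ := hb
  obtain ⟨hvc, hvcanc⟩ := hc
  rcases hcf v a b c (hle hva) (hle hvb) (hle hvc) hab hac hbc with h | h | h
  · rcases hdfs a b h with h' | h'
    · exact hanti a b hva hvaanc hvb hvbanc hab h'
    · exact hanti b a hvb hvbanc hva hvaanc hab.symm h'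
  · rcases hdfs a c h with h' | h'
    · exact hanti a c hva hvaanc hvc hvcanc hac h'
    · exact hanti c a hvc hvcanc hva hvaanc hac.symm h'
  · rcases hdfs b c h with h' | h'
    · exact hanti b c hvb hvbanc hvc hvcanc hbc h'
    · exact hanti c b hvc hvcanc hvb hvbanc hbc.symm h'
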